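/- Let A be an n×n quaternion matrix with group inverse X and Moore–Penrose inverse Y, and set Z := X·A·Y and Z' := Y·A·X. Then Z²·A = X and A·Z'² = X; that is, (A^⊕)² A = A^# and A (A_⊕)² = A^#. -/
import Mathlib


/-- `(A^⊕)²·A = A^#` and `A·(A_⊕)² = A^#` for a quaternion matrix `A`
with group inverse `X` and Moore–Penrose inverse `Y`. -/
theorem core_inverse_sq_eq_group {n : ℕ}
    (A X Y : Matrix (Fin n) (Fin n) (Quaternion ℝ))
    (hX1 : A * X * A = A) (hX2 : X * A * X = X) (hX3 : A * X = X * A)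
    (hY1 : A * Y * A = A) (hY2 : Y * A * Y = Y)
    (hY3 : (A * Y).conjTranspose = A * Y) (hY4 : (Y * A).conjTranspose = Y * A) :
    (X * A * Y) ^ 2 * A = X ∧ A * (Y * A * X) ^ 2 = X := by
  have hAYA : ∀ t : Matrix (Fin n) (Fin n) (Quaternion ℝ),
      A * (Y * (A * t)) = A * t := fun t => by
    rw [← mul_assoc, ← mul_assoc, hY1]
  constructor
  · simp only [sq, mul_assoc]
    rw [show A * (Y * A) = A from by rw [← mul_assoc, hY1]]
    rw [← hX3, hAYA, ← mul_assoc, hX2]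
  · simp only [sq, mul_assoc]
    rw [hAYA, ← mul_assoc, hX3, mul_assoc, ← hX3, hAYA, ← mul_assoc, hX2]
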